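/- For every n ≥ 0 the following hold in Δ_q: B_{nδ+α₀} = (−1)^n q^{−n} A·U_n(C) + (−1)^n q^{−n−1} B·U_{n−1}(C) + (−1)^n α·∑_{j≥0} q^{2j−n+1} U_{n−2j−2}(C) + (−1)^{n−1} β·∑_{j≥0} q^{2j−n} U_{n−2j−1}(C), and B_{nδ+α₁} = (−1)^n q^{n} B·U_n(C) + (−1)^n q^{n+1} A·U_{n−1}(C) + (−1)^n β·∑_{j≥0} q^{n−2j−1} U_{n−2j−2}(C) + (−1)^{n−1} α·∑_{j≥0} q^{n−2j} U_{n−2j−1}(C). (All sums are finite since U_m = 0 for m < 0.) -/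

import Mathlib

noncomputable section

variable (F : Type) [Field F] (q : F)

/-- Element `A + (qBC - q⁻¹CB)/(q² - q⁻²)` of the free algebra on generators A, B, C. -/
def eA : FreeAlgebra F (Fin 3) :=
  FreeAlgebra.ι F 0 + (q ^ 2 - q⁻¹ ^ 2)⁻¹ •
    (q • (FreeAlgebra.ι F 1 * FreeAlgebra.ι F 2) - q⁻¹ • (FreeAlgebra.ι F 2 * FreeAlgebra.ι F 1))

/-- Element `B + (qCA - q⁻¹AC)/(q² - q⁻²)` of the free algebra on generators A, B, C. -/
def eB : FreeAlgebra F (Fin 3) :=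
  FreeAlgebra.ι F 1 + (q ^ 2 - q⁻¹ ^ 2)⁻¹ •
    (q • (FreeAlgebra.ι F 2 * FreeAlgebra.ι F 0) - q⁻¹ • (FreeAlgebra.ι F 0 * FreeAlgebra.ι F 2))

/-- Element `C + (qAB - q⁻¹BA)/(q² - q⁻²)` of the free algebra on generators A, B, C. -/
def eC : FreeAlgebra F (Fin 3) :=
  FreeAlgebra.ι F 2 + (q ^ 2 - q⁻¹ ^ 2)⁻¹ •
    (q • (FreeAlgebra.ι F 0 * FreeAlgebra.ι F 1) - q⁻¹ • (FreeAlgebra.ι F 1 * FreeAlgebra.ι F 0))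

/-- Defining relations of the universal Askey–Wilson algebra: each of the three elements
`eA`, `eB`, `eC` commutes with each generator. -/
inductive AWRel : FreeAlgebra F (Fin 3) → FreeAlgebra F (Fin 3) → Prop
  | commA (i : Fin 3) : AWRel (eA F q * FreeAlgebra.ι F i) (FreeAlgebra.ι F i * eA F q)
  | commB (i : Fin 3) : AWRel (eB F q * FreeAlgebra.ι F i) (FreeAlgebra.ι F i * eB F q)
  | commC (i : Fin 3) : AWRel (eC F q * FreeAlgebra.ι F i) (FreeAlgebra.ι F i * eC F q)

/-- The universal Askey–Wilson algebra Δ_q. -/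
abbrev AW := RingQuot (AWRel F q)

/-- The generator A of Δ_q. -/
def Agen : AW F q := RingQuot.mkAlgHom F (AWRel F q) (FreeAlgebra.ι F 0)
/-- The generator B of Δ_q. -/
def Bgen : AW F q := RingQuot.mkAlgHom F (AWRel F q) (FreeAlgebra.ι F 1)
/-- The generator C of Δ_q. -/
def Cgen : AW F q := RingQuot.mkAlgHom F (AWRel F q) (FreeAlgebra.ι F 2)

/-- The central element α of Δ_q. -/
def αel : AW F q := (q + q⁻¹) • RingQuot.mkAlgHom F (AWRel F q) (eA F q)
/-- The central element β of Δ_q. -/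
def βel : AW F q := (q + q⁻¹) • RingQuot.mkAlgHom F (AWRel F q) (eB F q)
/-- The central element γ of Δ_q. -/
def γel : AW F q := (q + q⁻¹) • RingQuot.mkAlgHom F (AWRel F q) (eC F q)

/-- The elements `B_{nδ+α₀}` of Δ_q, defined by `B_{0δ+α₀} = A`,
`B_{δ+α₀} = B + [C,A]/(q−q⁻¹)`, `B_{nδ+α₀} = B_{(n−2)δ+α₀} + [C,B_{(n−1)δ+α₀}]/(q−q⁻¹)`. -/
def Bnd0 : ℕ → AW F q
  | 0 => Agen F q
  | 1 => Bgen F q + (q - q⁻¹)⁻¹ • (Cgen F q * Agen F q - Agen F q * Cgen F q)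
  | n + 2 => Bnd0 n + (q - q⁻¹)⁻¹ •
      (Cgen F q * Bnd0 (n + 1) - Bnd0 (n + 1) * Cgen F q)

/-- The elements `B_{nδ+α₁}` of Δ_q, defined by `B_{0δ+α₁} = B`,
`B_{δ+α₁} = A − [C,B]/(q−q⁻¹)`, `B_{nδ+α₁} = B_{(n−2)δ+α₁} − [C,B_{(n−1)δ+α₁}]/(q−q⁻¹)`. -/
def Bnd1 : ℕ → AW F q
  | 0 => Bgen F q
  | 1 => Agen F q - (q - q⁻¹)⁻¹ • (Cgen F q * Bgen F q - Bgen F q * Cgen F q)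
  | n + 2 => Bnd1 n - (q - q⁻¹)⁻¹ •
      (Cgen F q * Bnd1 (n + 1) - Bnd1 (n + 1) * Cgen F q)

/-- Monic Chebyshev polynomials of the second kind, indexed by ℕ:
`U_0 = 1`, `U_1 = x`, `U_{n+2} = x·U_{n+1} - U_n`. -/
def Uc : ℕ → Polynomial F
  | 0 => 1
  | 1 => Polynomial.X
  | n + 2 => Polynomial.X * Uc (n + 1) - Uc n

/-- Monic Chebyshev polynomials of the second kind, indexed by ℤ (zero for negative index). -/
def U (n : ℤ) : Polynomial F := if 0 ≤ n then Uc F n.toNat else 0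

/-- `U_m(C)`: the image in Δ_q of the Chebyshev polynomial `U_m` under evaluation at `C`. -/
def UC (m : ℤ) : AW F q := Polynomial.aeval (Cgen F q) (U F m)


section Lemmas
variable (F : Type) [Field F] (q : F)

lemma commute_aeval {A : Type} [Ring A] [Algebra F A] (x : A) (p : Polynomial F) :
    Commute x (Polynomial.aeval x p) := by
  induction p using Polynomial.induction_on' with
  | add p r hp hr => rw [map_add]; exact hp.add_right hr
  | monomial n a =>
    rw [Polynomial.aeval_monomial]
    exact (show Commute x ((algebraMap F A) a) from (Algebra.commutes a x).symm).mul_right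
      ((Commute.refl x).pow_right n)

lemma UC_neg (m : ℤ) (hm : m < 0) : UC F q m = 0 := by
  simp [UC, U, not_le.mpr hm]

lemma UC_zero : UC F q 0 = 1 := by
  simp only [UC, U, if_pos le_rfl, Int.toNat_zero]
  rw [show Uc F 0 = 1 from rfl, map_one]

lemma UC_natCast (k : ℕ) : UC F q (k : ℤ) = Polynomial.aeval (Cgen F q) (Uc F k) := by
  simp [UC, U]

lemma UC_one : UC F q 1 = Cgen F q := by
  rw [show (1 : ℤ) = ((1:ℕ) : ℤ) by norm_num, UC_natCast,
    show Uc F 1 = Polynomial.X from rfl, Polynomial.aeval_X]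

lemma C_mul_UC (m : ℤ) (hm : 0 ≤ m) :
    Cgen F q * UC F q m = UC F q (m + 1) + UC F q (m - 1) := by
  lift m to ℕ using hm
  match m with
  | 0 =>
    rw [show ((0:ℕ):ℤ) = 0 by norm_num, UC_zero, mul_one, zero_add, zero_sub, UC_one,
      UC_neg F q _ (by norm_num), add_zero]
  | (k+1) =>
    rw [show ((k+1:ℕ):ℤ) + 1 = ((k + 2 : ℕ) : ℤ) by push_cast; ring,
      show ((k+1:ℕ):ℤ) - 1 = ((k : ℕ) : ℤ) by push_cast; ring,
      UC_natCast, UC_natCast, UC_natCast,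
      show Uc F (k+2) = Polynomial.X * Uc F (k+1) - Uc F k from rfl]
    rw [map_sub, map_mul, Polynomial.aeval_X, sub_add_cancel]

lemma commute_C_UC (m : ℤ) : Commute (Cgen F q) (UC F q m) := commute_aeval F _ _

-- α and β commute with C
lemma alpha_comm_C : αel F q * Cgen F q = Cgen F q * αel F q := by
  unfold αel Cgen
  rw [smul_mul_assoc, mul_smul_comm]
  congr 1
  rw [← map_mul, ← map_mul]
  exact RingQuot.mkAlgHom_rel F (AWRel.commA 2)

lemma beta_comm_C : βel F q * Cgen F q = Cgen F q * βel F q := by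
  unfold βel Cgen
  rw [smul_mul_assoc, mul_smul_comm]
  congr 1
  rw [← map_mul, ← map_mul]
  exact RingQuot.mkAlgHom_rel F (AWRel.commB 2)

-- expansions of α, β
lemma beta_expand : βel F q = (q + q⁻¹) • (Bgen F q + (q ^ 2 - q⁻¹ ^ 2)⁻¹ •
    (q • (Cgen F q * Agen F q) - q⁻¹ • (Agen F q * Cgen F q))) := by
  unfold βel eB Bgen Agen Cgen
  rw [map_add, map_smul, map_sub, map_smul, map_smul, map_mul, map_mul]

lemma alpha_expand : αel F q = (q + q⁻¹) • (Agen F q + (q ^ 2 - q⁻¹ ^ 2)⁻¹ •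
    (q • (Bgen F q * Cgen F q) - q⁻¹ • (Cgen F q * Bgen F q))) := by
  unfold αel eA Bgen Agen Cgen
  rw [map_add, map_smul, map_sub, map_smul, map_smul, map_mul, map_mul]

lemma inv_qq (hq : q ≠ 0) (h4 : q ^ 4 ≠ 1) :
    (q ^ 2 - q⁻¹ ^ 2)⁻¹ = q ^ 2 / (q ^ 4 - 1) := by
  have hd : q ^ 4 - 1 ≠ 0 := sub_ne_zero.mpr h4
  rw [show q ^ 2 - q⁻¹ ^ 2 = (q ^ 4 - 1) / q ^ 2 by field_simp, inv_div]

lemma rel_CA (hq : q ≠ 0) (h4 : q ^ 4 ≠ 1) : Cgen F q * Agen F q - Agen F q * Cgen F q =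
    ((q - q⁻¹) * q⁻¹) • (βel F q - Agen F q * Cgen F q - (q + q⁻¹) • Bgen F q) := by
  have hd : q ^ 4 - 1 ≠ 0 := sub_ne_zero.mpr h4
  rw [beta_expand]
  match_scalars <;> (try simp only [inv_qq F q hq h4]) <;> field_simp <;> try ring

lemma rel_CB (hq : q ≠ 0) (h4 : q ^ 4 ≠ 1) : Cgen F q * Bgen F q - Bgen F q * Cgen F q =
    ((q - q⁻¹) * q) • (Bgen F q * Cgen F q + (q + q⁻¹) • Agen F q - αel F q) := by
  have hd : q ^ 4 - 1 ≠ 0 := sub_ne_zero.mpr h4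
  rw [alpha_expand]
  match_scalars <;> (try simp only [inv_qq F q hq h4]) <;> field_simp <;> try ring

end Lemmas

section Lemmas2
variable (F : Type) [Field F] (q : F)

lemma comm_C_A_UC (hq : q ≠ 0) (h4 : q ^ 4 ≠ 1) (m : ℤ) (hm : 0 ≤ m) :
    Cgen F q * (Agen F q * UC F q m) - (Agen F q * UC F q m) * Cgen F q =
      ((q - q⁻¹) * q⁻¹) • (βel F q * UC F q m - Agen F q * UC F q (m + 1)
        - Agen F q * UC F q (m - 1) - (q + q⁻¹) • (Bgen F q * UC F q m)) := by
  have h1 : (Agen F q * UC F q m) * Cgen F q = (Agen F q * Cgen F q) * UC F q m := by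
    rw [mul_assoc, mul_assoc, (commute_C_UC F q m).eq]
  rw [h1, ← mul_assoc, ← sub_mul, rel_CA F q hq h4, smul_mul_assoc]
  congr 1
  rw [sub_mul, sub_mul, smul_mul_assoc, mul_assoc, C_mul_UC F q m hm, mul_add]
  abel

lemma comm_C_B_UC (hq : q ≠ 0) (h4 : q ^ 4 ≠ 1) (m : ℤ) (hm : 0 ≤ m) :
    Cgen F q * (Bgen F q * UC F q m) - (Bgen F q * UC F q m) * Cgen F q =
      ((q - q⁻¹) * q) • (Bgen F q * UC F q (m + 1) + Bgen F q * UC F q (m - 1)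
        + (q + q⁻¹) • (Agen F q * UC F q m) - αel F q * UC F q m) := by
  have h1 : (Bgen F q * UC F q m) * Cgen F q = (Bgen F q * Cgen F q) * UC F q m := by
    rw [mul_assoc, mul_assoc, (commute_C_UC F q m).eq]
  rw [h1, ← mul_assoc, ← sub_mul, rel_CB F q hq h4, smul_mul_assoc]
  congr 1
  rw [sub_mul, add_mul, smul_mul_assoc, mul_assoc, C_mul_UC F q m hm, mul_add]

lemma finsum_UC (c : ℕ → F) (g : ℕ → ℤ) (N : ℕ) (h : ∀ j, N ≤ j → g j < 0) :
    (∑ᶠ j : ℕ, c j • UC F q (g j)) = ∑ j ∈ Finset.range N, c j • UC F q (g j) := by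
  apply finsum_eq_finset_sum_of_support_subset
  intro j hj
  simp only [Function.mem_support] at hj
  by_contra hjN
  simp only [Finset.coe_range, Set.mem_Iio, not_lt] at hjN
  exact hj (by rw [UC_neg F q _ (h j hjN), smul_zero])

/-- α-sum of family 0. -/
def SA (n : ℕ) : AW F q := ∑ᶠ j : ℕ, q ^ (2 * (j : ℤ) - (n : ℤ) + 1) • UC F q ((n : ℤ) - 2 * j - 2)
/-- β-sum of family 0. -/
def TA (n : ℕ) : AW F q := ∑ᶠ j : ℕ, q ^ (2 * (j : ℤ) - (n : ℤ)) • UC F q ((n : ℤ) - 2 * j - 1)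
/-- β-sum of family 1. -/
def SB (n : ℕ) : AW F q := ∑ᶠ j : ℕ, q ^ ((n : ℤ) - 2 * j - 1) • UC F q ((n : ℤ) - 2 * j - 2)
/-- α-sum of family 1. -/
def TB (n : ℕ) : AW F q := ∑ᶠ j : ℕ, q ^ ((n : ℤ) - 2 * j) • UC F q ((n : ℤ) - 2 * j - 1)

lemma SA_range (n N : ℕ) (hN : n ≤ 2 * N + 1) :
    SA F q n = ∑ j ∈ Finset.range N, q ^ (2 * (j : ℤ) - (n : ℤ) + 1) • UC F q ((n : ℤ) - 2 * j - 2) :=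
  finsum_UC F q _ _ N (fun j hj => by omega)

lemma TA_range (n N : ℕ) (hN : n ≤ 2 * N) :
    TA F q n = ∑ j ∈ Finset.range N, q ^ (2 * (j : ℤ) - (n : ℤ)) • UC F q ((n : ℤ) - 2 * j - 1) :=
  finsum_UC F q _ _ N (fun j hj => by omega)

lemma SB_range (n N : ℕ) (hN : n ≤ 2 * N + 1) :
    SB F q n = ∑ j ∈ Finset.range N, q ^ ((n : ℤ) - 2 * j - 1) • UC F q ((n : ℤ) - 2 * j - 2) :=
  finsum_UC F q _ _ N (fun j hj => by omega)

lemma TB_range (n N : ℕ) (hN : n ≤ 2 * N) :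
    TB F q n = ∑ j ∈ Finset.range N, q ^ ((n : ℤ) - 2 * j) • UC F q ((n : ℤ) - 2 * j - 1) :=
  finsum_UC F q _ _ N (fun j hj => by omega)

lemma SA_zero : SA F q 0 = 0 := by rw [SA_range F q 0 0 (by omega), Finset.sum_range_zero]
lemma TA_zero : TA F q 0 = 0 := by rw [TA_range F q 0 0 (by omega), Finset.sum_range_zero]
lemma SB_zero : SB F q 0 = 0 := by rw [SB_range F q 0 0 (by omega), Finset.sum_range_zero]
lemma TB_zero : TB F q 0 = 0 := by rw [TB_range F q 0 0 (by omega), Finset.sum_range_zero]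
lemma SA_one : SA F q 1 = 0 := by rw [SA_range F q 1 0 (by omega), Finset.sum_range_zero]
lemma SB_one : SB F q 1 = 0 := by rw [SB_range F q 1 0 (by omega), Finset.sum_range_zero]

lemma TA_one : TA F q 1 = q⁻¹ • 1 := by
  rw [TA_range F q 1 1 (by omega), Finset.sum_range_one]
  norm_num
  rw [UC_zero]

lemma TB_one : TB F q 1 = q • 1 := by
  rw [TB_range F q 1 1 (by omega), Finset.sum_range_one]
  norm_num
  rw [UC_zero]

lemma term_congr (a b c d : ℤ) (h1 : a = b) (h2 : c = d) :
    q ^ a • UC F q c = q ^ b • UC F q d := by rw [h1, h2]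

lemma SA_rec (n : ℕ) : SA F q (n + 2) = q ^ (-(n:ℤ) - 1) • UC F q (n : ℤ) + SA F q n := by
  rw [SA_range F q (n+2) (n+2) (by omega), Finset.sum_range_succ' _ (n+1),
    SA_range F q n (n+1) (by omega), add_comm]
  congr 1
  · exact term_congr F q _ _ _ _ (by push_cast; ring) (by push_cast; ring)
  · exact Finset.sum_congr rfl fun j _ => term_congr F q _ _ _ _ (by push_cast; ring) (by push_cast; ring)
lemma TA_rec (n : ℕ) : TA F q (n + 2) = q ^ (-(n:ℤ) - 2) • UC F q ((n : ℤ) + 1) + TA F q n := by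
  rw [TA_range F q (n+2) (n+2) (by omega), Finset.sum_range_succ' _ (n+1),
    TA_range F q n (n+1) (by omega), add_comm]
  congr 1
  · exact term_congr F q _ _ _ _ (by push_cast; ring) (by push_cast; ring)
  · exact Finset.sum_congr rfl fun j _ => term_congr F q _ _ _ _ (by push_cast; ring) (by push_cast; ring)
lemma SB_rec (n : ℕ) : SB F q (n + 2) = q ^ ((n:ℤ) + 1) • UC F q (n : ℤ) + SB F q n := by
  rw [SB_range F q (n+2) (n+2) (by omega), Finset.sum_range_succ' _ (n+1),
    SB_range F q n (n+1) (by omega), add_comm]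
  congr 1
  · exact term_congr F q _ _ _ _ (by push_cast; ring) (by push_cast; ring)
  · exact Finset.sum_congr rfl fun j _ => term_congr F q _ _ _ _ (by push_cast; ring) (by push_cast; ring)
lemma TB_rec (n : ℕ) : TB F q (n + 2) = q ^ ((n:ℤ) + 2) • UC F q ((n : ℤ) + 1) + TB F q n := by
  rw [TB_range F q (n+2) (n+2) (by omega), Finset.sum_range_succ' _ (n+1),
    TB_range F q n (n+1) (by omega), add_comm]
  congr 1
  · exact term_congr F q _ _ _ _ (by push_cast; ring) (by push_cast; ring)
  · exact Finset.sum_congr rfl fun j _ => term_congr F q _ _ _ _ (by push_cast; ring) (by push_cast; ring)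
lemma commute_C_SA (n : ℕ) : Commute (Cgen F q) (SA F q n) := by
  rw [SA_range F q n (n+1) (by omega)]
  exact Commute.sum_right _ _ _ (fun j _ => (commute_C_UC F q _).smul_right _)

lemma commute_C_TA (n : ℕ) : Commute (Cgen F q) (TA F q n) := by
  rw [TA_range F q n (n+1) (by omega)]
  exact Commute.sum_right _ _ _ (fun j _ => (commute_C_UC F q _).smul_right _)

lemma commute_C_SB (n : ℕ) : Commute (Cgen F q) (SB F q n) := by
  rw [SB_range F q n (n+1) (by omega)]
  exact Commute.sum_right _ _ _ (fun j _ => (commute_C_UC F q _).smul_right _)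

lemma commute_C_TB (n : ℕ) : Commute (Cgen F q) (TB F q n) := by
  rw [TB_range F q n (n+1) (by omega)]
  exact Commute.sum_right _ _ _ (fun j _ => (commute_C_UC F q _).smul_right _)

end Lemmas2

section Main
variable (F : Type) [Field F] (q : F)

/-- Closed form for family 0. -/
def X0 (n : ℕ) : AW F q :=
  ((-1 : F) ^ n * q ^ (-(n : ℤ))) • (Agen F q * UC F q (n : ℤ)) +
  ((-1 : F) ^ n * q ^ (-(n : ℤ) - 1)) • (Bgen F q * UC F q ((n : ℤ) - 1)) +
  (-1 : F) ^ n • (αel F q * SA F q n) - (-1 : F) ^ n • (βel F q * TA F q n)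

/-- Closed form for family 1. -/
def X1 (n : ℕ) : AW F q :=
  ((-1 : F) ^ n * q ^ (n : ℤ)) • (Bgen F q * UC F q (n : ℤ)) +
  ((-1 : F) ^ n * q ^ ((n : ℤ) + 1)) • (Agen F q * UC F q ((n : ℤ) - 1)) +
  (-1 : F) ^ n • (βel F q * SB F q n) - (-1 : F) ^ n • (αel F q * TB F q n)

lemma X0_zero : X0 F q 0 = Agen F q := by
  simp [X0, SA_zero, TA_zero, UC_zero, UC_neg F q (-1) (by norm_num)]

lemma X1_zero : X1 F q 0 = Bgen F q := by
  simp [X1, SB_zero, TB_zero, UC_zero, UC_neg F q (-1) (by norm_num)]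

lemma X0_one (hq : q ≠ 0) (h2 : q ^ 2 ≠ 1) (h4 : q ^ 4 ≠ 1) :
    X0 F q 1 = Bgen F q + (q - q⁻¹)⁻¹ • (Cgen F q * Agen F q - Agen F q * Cgen F q) := by
  have hqm : q - q⁻¹ ≠ 0 := by
    rw [sub_ne_zero]
    intro h
    have h' : q * q = q * q⁻¹ := by rw [← h]
    exact h2 (by rw [sq, h', mul_inv_cancel₀ hq])
  rw [rel_CA F q hq h4]
  unfold X0
  rw [SA_one, TA_one, show ((1:ℕ):ℤ) = 1 by norm_num, UC_one,
    show (1:ℤ) - 1 = 0 by ring, UC_zero]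
  simp only [mul_zero, smul_zero, mul_one, mul_smul_comm, smul_smul]
  rw [show (q - q⁻¹)⁻¹ * ((q - q⁻¹) * q⁻¹) = q⁻¹ by
    rw [← mul_assoc, inv_mul_cancel₀ hqm, one_mul]]
  match_scalars <;> (simp [zpow_sub₀ hq, zpow_neg, zpow_ofNat]; try field_simp; try ring)

lemma X1_one (hq : q ≠ 0) (h2 : q ^ 2 ≠ 1) (h4 : q ^ 4 ≠ 1) :
    X1 F q 1 = Agen F q - (q - q⁻¹)⁻¹ • (Cgen F q * Bgen F q - Bgen F q * Cgen F q) := by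
  have hqm : q - q⁻¹ ≠ 0 := by
    rw [sub_ne_zero]
    intro h
    have h' : q * q = q * q⁻¹ := by rw [← h]
    exact h2 (by rw [sq, h', mul_inv_cancel₀ hq])
  rw [rel_CB F q hq h4]
  unfold X1
  rw [SB_one, TB_one, show ((1:ℕ):ℤ) = 1 by norm_num, UC_one,
    show (1:ℤ) - 1 = 0 by ring, UC_zero]
  simp only [mul_zero, smul_zero, mul_one, mul_smul_comm, smul_smul]
  rw [show (q - q⁻¹)⁻¹ * ((q - q⁻¹) * q) = q by
    rw [← mul_assoc, inv_mul_cancel₀ hqm, one_mul]]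
  match_scalars <;> (simp [zpow_sub₀ hq, zpow_neg, zpow_ofNat]; try field_simp; try ring)

end Main

section Step
variable (F : Type) [Field F] (q : F)

lemma comm_C_alpha_S (S : AW F q) (hS : Commute (Cgen F q) S) :
    (αel F q * S) * Cgen F q = Cgen F q * (αel F q * S) := by
  rw [mul_assoc, ← hS.eq, ← mul_assoc, alpha_comm_C F q, mul_assoc]

lemma comm_C_beta_S (S : AW F q) (hS : Commute (Cgen F q) S) :
    (βel F q * S) * Cgen F q = Cgen F q * (βel F q * S) := by
  rw [mul_assoc, ← hS.eq, ← mul_assoc, beta_comm_C F q, mul_assoc]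

lemma X0_step (hq : q ≠ 0) (h2 : q ^ 2 ≠ 1) (h4 : q ^ 4 ≠ 1) (n : ℕ) :
    X0 F q (n + 2) = X0 F q n + (q - q⁻¹)⁻¹ •
      (Cgen F q * X0 F q (n + 1) - X0 F q (n + 1) * Cgen F q) := by
  have hqm : q - q⁻¹ ≠ 0 := by
    rw [sub_ne_zero]
    intro h
    have h' : q * q = q * q⁻¹ := by rw [← h]
    exact h2 (by rw [sq, h', mul_inv_cancel₀ hq])
  have hX1 : X0 F q (n+1) =
      ((-1 : F) ^ (n+1) * q ^ (-(n:ℤ) - 1)) • (Agen F q * UC F q ((n:ℤ)+1)) +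
      ((-1 : F) ^ (n+1) * q ^ (-(n:ℤ) - 2)) • (Bgen F q * UC F q (n:ℤ)) +
      (-1 : F) ^ (n+1) • (αel F q * SA F q (n+1)) -
      (-1 : F) ^ (n+1) • (βel F q * TA F q (n+1)) := by
    unfold X0
    rw [show (((n+1:ℕ)):ℤ) = (n:ℤ)+1 by push_cast; ring,
      show -((n:ℤ)+1) = -(n:ℤ)-1 by ring,
      show -(n:ℤ)-1-1 = -(n:ℤ)-2 by ring,
      show (n:ℤ)+1-1 = (n:ℤ) by ring]
  have hX2 : X0 F q (n+2) =
      ((-1 : F) ^ n * q ^ (-(n:ℤ) - 2)) • (Agen F q * UC F q ((n:ℤ)+2)) +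
      ((-1 : F) ^ n * q ^ (-(n:ℤ) - 3)) • (Bgen F q * UC F q ((n:ℤ)+1)) +
      ((-1 : F) ^ n * q ^ (-(n:ℤ) - 1)) • (αel F q * UC F q (n:ℤ)) +
      (-1 : F) ^ n • (αel F q * SA F q n) -
      ((-1 : F) ^ n * q ^ (-(n:ℤ) - 2)) • (βel F q * UC F q ((n:ℤ)+1)) -
      (-1 : F) ^ n • (βel F q * TA F q n) := by
    unfold X0
    rw [SA_rec, TA_rec,
      show (((n+2:ℕ)):ℤ) = (n:ℤ)+2 by push_cast; ring,
      show -((n:ℤ)+2) = -(n:ℤ)-2 by ring,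
      show -(n:ℤ)-2-1 = -(n:ℤ)-3 by ring,
      show (n:ℤ)+2-1 = (n:ℤ)+1 by ring,
      show ((-1:F))^(n+2) = (-1:F)^n by rw [pow_succ, pow_succ]; ring,
      mul_add, mul_add, mul_smul_comm, mul_smul_comm]
    match_scalars <;> try ring
  have hα := comm_C_alpha_S F q (SA F q (n+1)) (commute_C_SA F q (n+1))
  have hβ := comm_C_beta_S F q (TA F q (n+1)) (commute_C_TA F q (n+1))
  have hD : Cgen F q * X0 F q (n+1) - X0 F q (n+1) * Cgen F q =
      ((-1:F)^(n+1) * q ^ (-(n:ℤ)-1)) •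
        (Cgen F q * (Agen F q * UC F q ((n:ℤ)+1)) - (Agen F q * UC F q ((n:ℤ)+1)) * Cgen F q) +
      ((-1:F)^(n+1) * q ^ (-(n:ℤ)-2)) •
        (Cgen F q * (Bgen F q * UC F q (n:ℤ)) - (Bgen F q * UC F q (n:ℤ)) * Cgen F q) := by
    rw [hX1]
    simp only [mul_add, add_mul, mul_sub, sub_mul, smul_add, smul_sub, mul_smul_comm,
      smul_mul_assoc]
    rw [hα, hβ]
    match_scalars <;> try ring
  have hA := comm_C_A_UC F q hq h4 ((n:ℤ)+1) (by positivity)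
  rw [show (n:ℤ)+1+1 = (n:ℤ)+2 by ring, show (n:ℤ)+1-1 = (n:ℤ) by ring] at hA
  have hB := comm_C_B_UC F q hq h4 (n:ℤ) (Int.natCast_nonneg n)
  have hA' : (q - q⁻¹)⁻¹ • (Cgen F q * (Agen F q * UC F q ((n:ℤ)+1)) -
      (Agen F q * UC F q ((n:ℤ)+1)) * Cgen F q) =
      q⁻¹ • (βel F q * UC F q ((n:ℤ)+1) - Agen F q * UC F q ((n:ℤ)+2) -
        Agen F q * UC F q (n:ℤ) - (q + q⁻¹) • (Bgen F q * UC F q ((n:ℤ)+1))) := by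
    rw [hA, smul_smul, ← mul_assoc, inv_mul_cancel₀ hqm, one_mul]
  have hB' : (q - q⁻¹)⁻¹ • (Cgen F q * (Bgen F q * UC F q (n:ℤ)) -
      (Bgen F q * UC F q (n:ℤ)) * Cgen F q) =
      q • (Bgen F q * UC F q ((n:ℤ)+1) + Bgen F q * UC F q ((n:ℤ)-1) +
        (q + q⁻¹) • (Agen F q * UC F q (n:ℤ)) - αel F q * UC F q (n:ℤ)) := by
    rw [hB, smul_smul, ← mul_assoc, inv_mul_cancel₀ hqm, one_mul]
  rw [hX2, hD, smul_add,
    smul_comm ((q - q⁻¹)⁻¹) ((-1:F)^(n+1) * q ^ (-(n:ℤ)-1)),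
    smul_comm ((q - q⁻¹)⁻¹) ((-1:F)^(n+1) * q ^ (-(n:ℤ)-2)),
    hA', hB']
  unfold X0
  match_scalars <;>
    (try simp only [pow_succ, zpow_sub₀ hq, zpow_neg, zpow_natCast, zpow_one, zpow_ofNat];
     try field_simp;
     try ring;
     try (simp only [inv_pow]; field_simp; try ring))

lemma X1_step (hq : q ≠ 0) (h2 : q ^ 2 ≠ 1) (h4 : q ^ 4 ≠ 1) (n : ℕ) :
    X1 F q (n + 2) = X1 F q n - (q - q⁻¹)⁻¹ •
      (Cgen F q * X1 F q (n + 1) - X1 F q (n + 1) * Cgen F q) := by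
  have hqm : q - q⁻¹ ≠ 0 := by
    rw [sub_ne_zero]
    intro h
    have h' : q * q = q * q⁻¹ := by rw [← h]
    exact h2 (by rw [sq, h', mul_inv_cancel₀ hq])
  have hX1 : X1 F q (n+1) =
      ((-1 : F) ^ (n+1) * q ^ ((n:ℤ) + 1)) • (Bgen F q * UC F q ((n:ℤ)+1)) +
      ((-1 : F) ^ (n+1) * q ^ ((n:ℤ) + 2)) • (Agen F q * UC F q (n:ℤ)) +
      (-1 : F) ^ (n+1) • (βel F q * SB F q (n+1)) -
      (-1 : F) ^ (n+1) • (αel F q * TB F q (n+1)) := by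
    unfold X1
    rw [show (((n+1:ℕ)):ℤ) = (n:ℤ)+1 by push_cast; ring,
      show (n:ℤ)+1+1 = (n:ℤ)+2 by ring,
      show (n:ℤ)+1-1 = (n:ℤ) by ring]
  have hX2 : X1 F q (n+2) =
      ((-1 : F) ^ n * q ^ ((n:ℤ) + 2)) • (Bgen F q * UC F q ((n:ℤ)+2)) +
      ((-1 : F) ^ n * q ^ ((n:ℤ) + 3)) • (Agen F q * UC F q ((n:ℤ)+1)) +
      ((-1 : F) ^ n * q ^ ((n:ℤ) + 1)) • (βel F q * UC F q (n:ℤ)) +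
      (-1 : F) ^ n • (βel F q * SB F q n) -
      ((-1 : F) ^ n * q ^ ((n:ℤ) + 2)) • (αel F q * UC F q ((n:ℤ)+1)) -
      (-1 : F) ^ n • (αel F q * TB F q n) := by
    unfold X1
    rw [SB_rec, TB_rec,
      show (((n+2:ℕ)):ℤ) = (n:ℤ)+2 by push_cast; ring,
      show (n:ℤ)+2+1 = (n:ℤ)+3 by ring,
      show (n:ℤ)+2-1 = (n:ℤ)+1 by ring,
      show ((-1:F))^(n+2) = (-1:F)^n by rw [pow_succ, pow_succ]; ring,
      mul_add, mul_add, mul_smul_comm, mul_smul_comm]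
    match_scalars <;> try ring
  have hα := comm_C_alpha_S F q (TB F q (n+1)) (commute_C_TB F q (n+1))
  have hβ := comm_C_beta_S F q (SB F q (n+1)) (commute_C_SB F q (n+1))
  have hD : Cgen F q * X1 F q (n+1) - X1 F q (n+1) * Cgen F q =
      ((-1:F)^(n+1) * q ^ ((n:ℤ)+1)) •
        (Cgen F q * (Bgen F q * UC F q ((n:ℤ)+1)) - (Bgen F q * UC F q ((n:ℤ)+1)) * Cgen F q) +
      ((-1:F)^(n+1) * q ^ ((n:ℤ)+2)) •
        (Cgen F q * (Agen F q * UC F q (n:ℤ)) - (Agen F q * UC F q (n:ℤ)) * Cgen F q) := by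
    rw [hX1]
    simp only [mul_add, add_mul, mul_sub, sub_mul, smul_add, smul_sub, mul_smul_comm,
      smul_mul_assoc]
    rw [hα, hβ]
    match_scalars <;> try ring
  have hB := comm_C_B_UC F q hq h4 ((n:ℤ)+1) (by positivity)
  rw [show (n:ℤ)+1+1 = (n:ℤ)+2 by ring, show (n:ℤ)+1-1 = (n:ℤ) by ring] at hB
  have hA := comm_C_A_UC F q hq h4 (n:ℤ) (Int.natCast_nonneg n)
  have hB' : (q - q⁻¹)⁻¹ • (Cgen F q * (Bgen F q * UC F q ((n:ℤ)+1)) -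
      (Bgen F q * UC F q ((n:ℤ)+1)) * Cgen F q) =
      q • (Bgen F q * UC F q ((n:ℤ)+2) + Bgen F q * UC F q (n:ℤ) +
        (q + q⁻¹) • (Agen F q * UC F q ((n:ℤ)+1)) - αel F q * UC F q ((n:ℤ)+1)) := by
    rw [hB, smul_smul, ← mul_assoc, inv_mul_cancel₀ hqm, one_mul]
  have hA' : (q - q⁻¹)⁻¹ • (Cgen F q * (Agen F q * UC F q (n:ℤ)) -
      (Agen F q * UC F q (n:ℤ)) * Cgen F q) =
      q⁻¹ • (βel F q * UC F q (n:ℤ) - Agen F q * UC F q ((n:ℤ)+1) -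
        Agen F q * UC F q ((n:ℤ)-1) - (q + q⁻¹) • (Bgen F q * UC F q (n:ℤ))) := by
    rw [hA, smul_smul, ← mul_assoc, inv_mul_cancel₀ hqm, one_mul]
  rw [hX2, hD, smul_add,
    smul_comm ((q - q⁻¹)⁻¹) ((-1:F)^(n+1) * q ^ ((n:ℤ)+1)),
    smul_comm ((q - q⁻¹)⁻¹) ((-1:F)^(n+1) * q ^ ((n:ℤ)+2)),
    hB', hA']
  unfold X1
  match_scalars <;>
    (try simp only [pow_succ, zpow_add₀ hq, zpow_natCast, zpow_one, zpow_ofNat];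
     try field_simp;
     try ring;
     try (simp only [inv_pow]; field_simp; try ring))

end Step

section Final
variable (F : Type) [Field F] (q : F)

lemma closed0 (hq : q ≠ 0) (h2 : q ^ 2 ≠ 1) (h4 : q ^ 4 ≠ 1) (n : ℕ) :
    Bnd0 F q n = X0 F q n := by
  induction n using Nat.twoStepInduction with
  | zero => rw [X0_zero]; rfl
  | one => rw [X0_one F q hq h2 h4]; rfl
  | more n ih1 ih2 =>
    rw [show Bnd0 F q (n+2) = Bnd0 F q n + (q - q⁻¹)⁻¹ •
      (Cgen F q * Bnd0 F q (n + 1) - Bnd0 F q (n + 1) * Cgen F q) from rfl,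
      ih1, ih2, ← X0_step F q hq h2 h4 n]

lemma closed1 (hq : q ≠ 0) (h2 : q ^ 2 ≠ 1) (h4 : q ^ 4 ≠ 1) (n : ℕ) :
    Bnd1 F q n = X1 F q n := by
  induction n using Nat.twoStepInduction with
  | zero => rw [X1_zero]; rfl
  | one => rw [X1_one F q hq h2 h4]; rfl
  | more n ih1 ih2 =>
    rw [show Bnd1 F q (n+2) = Bnd1 F q n - (q - q⁻¹)⁻¹ •
      (Cgen F q * Bnd1 F q (n + 1) - Bnd1 F q (n + 1) * Cgen F q) from rfl,
      ih1, ih2, ← X1_step F q hq h2 h4 n]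

end Final

/-- Theorem 5.5 of the paper: closed forms for `B_{nδ+α₀}` and `B_{nδ+α₁}` in Δ_q. -/
theorem Bnd_closed_form (F : Type) [Field F] [IsAlgClosed F] [CharZero F]
    (q : F) (hq : q ≠ 0) (hq1 : ∀ n : ℕ, n ≠ 0 → q ^ n ≠ 1) (n : ℕ) :
    Bnd0 F q n =
      ((-1 : F) ^ n * q ^ (-(n : ℤ))) • (Agen F q * UC F q (n : ℤ)) +
      ((-1 : F) ^ n * q ^ (-(n : ℤ) - 1)) • (Bgen F q * UC F q ((n : ℤ) - 1)) +
      (-1 : F) ^ n • (αel F q *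
        ∑ᶠ j : ℕ, q ^ (2 * (j : ℤ) - (n : ℤ) + 1) • UC F q ((n : ℤ) - 2 * j - 2)) +
      (-1 : F) ^ ((n : ℤ) - 1) • (βel F q *
        ∑ᶠ j : ℕ, q ^ (2 * (j : ℤ) - (n : ℤ)) • UC F q ((n : ℤ) - 2 * j - 1)) ∧
    Bnd1 F q n =
      ((-1 : F) ^ n * q ^ (n : ℤ)) • (Bgen F q * UC F q (n : ℤ)) +
      ((-1 : F) ^ n * q ^ ((n : ℤ) + 1)) • (Agen F q * UC F q ((n : ℤ) - 1)) +
      (-1 : F) ^ n • (βel F q *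
        ∑ᶠ j : ℕ, q ^ ((n : ℤ) - 2 * j - 1) • UC F q ((n : ℤ) - 2 * j - 2)) +
      (-1 : F) ^ ((n : ℤ) - 1) • (αel F q *
        ∑ᶠ j : ℕ, q ^ ((n : ℤ) - 2 * j) • UC F q ((n : ℤ) - 2 * j - 1)) := by
  have h2 : q ^ 2 ≠ 1 := hq1 2 (by norm_num)
  have h4 : q ^ 4 ≠ 1 := hq1 4 (by norm_num)
  have hsign : ((-1 : F) ^ ((n : ℤ) - 1)) = -(-1 : F) ^ n := by
    rw [zpow_sub₀ (by norm_num : (-1 : F) ≠ 0), zpow_one, zpow_natCast, div_neg, div_one]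
  constructor
  · have hSA : (∑ᶠ j : ℕ, q ^ (2 * (j : ℤ) - (n : ℤ) + 1) • UC F q ((n : ℤ) - 2 * j - 2))
        = SA F q n := rfl
    have hTA : (∑ᶠ j : ℕ, q ^ (2 * (j : ℤ) - (n : ℤ)) • UC F q ((n : ℤ) - 2 * j - 1))
        = TA F q n := rfl
    rw [closed0 F q hq h2 h4 n, hSA, hTA, hsign]
    unfold X0
    match_scalars <;> try ring
  · have hSB : (∑ᶠ j : ℕ, q ^ ((n : ℤ) - 2 * j - 1) • UC F q ((n : ℤ) - 2 * j - 2))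
        = SB F q n := rfl
    have hTB : (∑ᶠ j : ℕ, q ^ ((n : ℤ) - 2 * j) • UC F q ((n : ℤ) - 2 * j - 1))
        = TB F q n := rfl
    rw [closed1 F q hq h2 h4 n, hSB, hTB, hsign]
    unfold X1
    match_scalars <;> try ring
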